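/- Let p : [r,s] → ℂ×ℂ be a continuously differentiable closed curve (p(r) = p(s)) and let p₀ ∈ ℂ×ℂ be such that p(t) − p₀ is nonsingular for every t ∈ [r,s]. Then the value F = ∫_r^s (p(t) − p₀)⁻¹ ⊙ p′(t) dt is a period of the bicomplex exponential: writing F = (A,B) with A, B ∈ ℂ, one has (e^A·cos B, e^A·sin B) = (1,0). -/

import Mathlib

open Set intervalIntegral MeasureTheory

lemma exp_integral_logderiv (r s : ℝ) (hrs : r ≤ s) (f f' : ℝ → ℂ)
    (hd : ∀ t ∈ Set.Icc r s, HasDerivAt f (f' t) t)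
    (hc : ContinuousOn f' (Set.Icc r s))
    (hne : ∀ t ∈ Set.Icc r s, f t ≠ 0) :
    Complex.exp (∫ t in r..s, f' t / f t) * f r = f s := by
  set g : ℝ → ℂ := fun t => f' t / f t with hg_def
  have hfc : ContinuousOn f (Set.Icc r s) := fun t ht =>
    (hd t ht).continuousAt.continuousWithinAt
  have hgc : ContinuousOn g (Set.Icc r s) := hc.div hfc hne
  have huIcc : Set.uIcc r s = Set.Icc r s := Set.uIcc_of_le hrs
  have hgi : IntervalIntegrable g volume r s := by
    apply ContinuousOn.intervalIntegrable
    rwa [huIcc]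
  set G : ℝ → ℂ := fun t => ∫ u in r..t, g u with hG_def
  have hGc : ContinuousOn G (Set.Icc r s) := by
    have := continuousOn_primitive_interval (μ := volume) (a := r) (b := s) (f := g) ?_
    · rwa [huIcc] at this
    · rw [huIcc]; exact hgc.integrableOn_compact isCompact_Icc
  set h : ℝ → ℂ := fun t => Complex.exp (-G t) * f t with hh_def
  have hconst : ∀ x ∈ Set.Icc r s, h x = h r := by
    apply constant_of_has_deriv_right_zero
    · exact ((hGc.neg.cexp)).mul hfc
    · intro x hx
      have hxI : x ∈ Set.Icc r s := ⟨hx.1, hx.2.le⟩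
      have hmem : Set.Icc r s ∈ nhdsWithin x (Set.Ici x) := by
        apply Filter.mem_of_superset
          (Filter.inter_mem self_mem_nhdsWithin
            (mem_nhdsWithin_of_mem_nhds (Iio_mem_nhds hx.2)))
        rintro y ⟨hy1, hy2⟩
        exact ⟨le_trans hx.1 hy1, le_of_lt hy2⟩
      have hmem' : Set.Icc r s ∈ nhdsWithin x (Set.Ioi x) :=
        nhdsWithin_mono x Set.Ioi_subset_Ici_self hmem
      have hGd : HasDerivWithinAt G (g x) (Set.Ici x) x := by
        apply integral_hasDerivWithinAt_right (s := Set.Ici x) (t := Set.Ioi x)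
        · exact hgi.mono_set (by rw [huIcc, Set.uIcc_of_le hx.1]; exact Set.Icc_subset_Icc_right hx.2.le)
        · exact ⟨Set.Icc r s, hmem', hgc.aestronglyMeasurable measurableSet_Icc⟩
        · exact (hgc x hxI).mono_of_mem_nhdsWithin hmem'
      have hfd : HasDerivWithinAt f (f' x) (Set.Ici x) x := (hd x hxI).hasDerivWithinAt
      have hexp : HasDerivWithinAt (fun t => Complex.exp (-G t))
          (Complex.exp (-G x) * (-g x)) (Set.Ici x) x := by
        simpa [Function.comp_def] using (Complex.hasDerivAt_exp (-G x)).comp_hasDerivWithinAt x hGd.neg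
      have := hexp.mul hfd
      have key : -(Complex.exp (-G x) * g x * f x) + Complex.exp (-G x) * f' x = 0 := by
        have hgf : g x * f x = f' x := div_mul_cancel₀ _ (hne x hxI)
        rw [mul_assoc, hgf]; ring
      show HasDerivWithinAt (fun t => Complex.exp (-G t) * f t) 0 (Set.Ici x) x
      have h2 : HasDerivWithinAt (fun y => Complex.exp (-G y) * f y)
          (-(Complex.exp (-G x) * g x * f x) + Complex.exp (-G x) * f' x) (Set.Ici x) x := by
        simpa [Pi.mul_def] using this
      exact key ▸ h2
  have hs' : h s = h r := hconst s ⟨hrs, le_refl s⟩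
  have hGr : G r = 0 := by simp [hG_def]
  have : Complex.exp (-G s) * f s = f r := by
    simpa [hh_def, hGr] using hs'
  calc Complex.exp (G s) * f r = Complex.exp (G s) * (Complex.exp (-G s) * f s) := by rw [this]
    _ = f s := by rw [← mul_assoc, ← Complex.exp_add]; simp

/-- Bicomplex multiplication on ℂ × ℂ. -/
def bmul (p q : ℂ × ℂ) : ℂ × ℂ := (p.1 * q.1 - p.2 * q.2, p.2 * q.1 + p.1 * q.2)

/-- Bicomplex inverse (defined for nonsingular numbers). -/
noncomputable def binv (p : ℂ × ℂ) : ℂ × ℂ :=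
  (p.1 / (p.1 ^ 2 + p.2 ^ 2), -p.2 / (p.1 ^ 2 + p.2 ^ 2))

theorem twining_integral_is_period_of_exp (r s : ℝ) (hrs : r ≤ s)
    (p p' : ℝ → ℂ × ℂ)
    (hderiv : ∀ t ∈ Set.Icc r s, HasDerivAt p (p' t) t)
    (hcont : ContinuousOn p' (Set.Icc r s))
    (hclosed : p r = p s)
    (p₀ : ℂ × ℂ)
    (hns : ∀ t ∈ Set.Icc r s, (p t - p₀).1 ^ 2 + (p t - p₀).2 ^ 2 ≠ 0) :
    ∀ F : ℂ × ℂ, F = (∫ t in r..s, bmul (binv (p t - p₀)) (p' t)) →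
      (Complex.exp F.1 * Complex.cos F.2, Complex.exp F.1 * Complex.sin F.2) =
        ((1 : ℂ), (0 : ℂ)) := by
  intro F hF
  set a : ℝ → ℂ := fun t => (p t - p₀).1 with ha_def
  set b : ℝ → ℂ := fun t => (p t - p₀).2 with hb_def
  set c : ℝ → ℂ := fun t => (p' t).1 with hc_def
  set d : ℝ → ℂ := fun t => (p' t).2 with hd_def
  set q : ℝ → ℂ × ℂ := fun t => bmul (binv (p t - p₀)) (p' t) with hq_def
  -- derivatives of a and b
  have hab : ∀ t ∈ Set.Icc r s, HasDerivAt a (c t) t ∧ HasDerivAt b (d t) t := by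
    intro t ht
    have hp : HasDerivAt (fun u => p u - p₀) (p' t) t := (hderiv t ht).sub_const p₀
    constructor
    · exact (((ContinuousLinearMap.fst ℂ ℂ ℂ).restrictScalars ℝ).hasFDerivAt
        (x := p t - p₀)).comp_hasDerivAt t hp
    · exact (((ContinuousLinearMap.snd ℂ ℂ ℂ).restrictScalars ℝ).hasFDerivAt
        (x := p t - p₀)).comp_hasDerivAt t hp
  -- continuity of a, b on Icc
  have hpc : ContinuousOn p (Set.Icc r s) := fun t ht =>
    (hderiv t ht).continuousAt.continuousWithinAt
  have hac : ContinuousOn a (Set.Icc r s) := (hpc.sub continuousOn_const).fst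
  have hbc : ContinuousOn b (Set.Icc r s) := (hpc.sub continuousOn_const).snd
  have hcc : ContinuousOn c (Set.Icc r s) := hcont.fst
  have hdc : ContinuousOn d (Set.Icc r s) := hcont.snd
  have hD : ∀ t ∈ Set.Icc r s, a t ^ 2 + b t ^ 2 ≠ 0 := fun t ht => hns t ht
  -- q components
  have hq1 : ∀ t, (q t).1 = (a t * c t + b t * d t) / (a t ^ 2 + b t ^ 2) := by
    intro t; simp only [hq_def, bmul, binv]; ring
  have hq2 : ∀ t, (q t).2 = (a t * d t - b t * c t) / (a t ^ 2 + b t ^ 2) := by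
    intro t; simp only [hq_def, bmul, binv]; ring
  -- continuity and integrability of q components
  have hq1c : ContinuousOn (fun t => (q t).1) (Set.Icc r s) := by
    have : ContinuousOn (fun t => (a t * c t + b t * d t) / (a t ^ 2 + b t ^ 2))
        (Set.Icc r s) :=
      ((hac.mul hcc).add (hbc.mul hdc)).div (((hac.pow 2).add (hbc.pow 2))) hD
    exact this.congr fun t _ => hq1 t
  have hq2c : ContinuousOn (fun t => (q t).2) (Set.Icc r s) := by
    have : ContinuousOn (fun t => (a t * d t - b t * c t) / (a t ^ 2 + b t ^ 2))
        (Set.Icc r s) :=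
      ((hac.mul hdc).sub (hbc.mul hcc)).div (((hac.pow 2).add (hbc.pow 2))) hD
    exact this.congr fun t _ => hq2 t
  have huIcc : Set.uIcc r s = Set.Icc r s := Set.uIcc_of_le hrs
  have hqi1 : IntervalIntegrable (fun t => (q t).1) MeasureTheory.volume r s := by
    apply ContinuousOn.intervalIntegrable; rwa [huIcc]
  have hqi2 : IntervalIntegrable (fun t => (q t).2) MeasureTheory.volume r s := by
    apply ContinuousOn.intervalIntegrable; rwa [huIcc]
  have hqi : IntervalIntegrable q MeasureTheory.volume r s := by
    apply ContinuousOn.intervalIntegrable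
    rw [huIcc]; exact hq1c.prodMk hq2c
  -- components of F
  have hF1 : F.1 = ∫ t in r..s, (q t).1 := by
    rw [hF]
    exact ((ContinuousLinearMap.fst ℂ ℂ ℂ).intervalIntegral_comp_comm hqi).symm
  have hF2 : F.2 = ∫ t in r..s, (q t).2 := by
    rw [hF]
    exact ((ContinuousLinearMap.snd ℂ ℂ ℂ).intervalIntegral_comp_comm hqi).symm
  -- the two winding integrals
  have key : ∀ (σ : ℂ), σ ^ 2 = 1 →
      Complex.exp (F.1 + F.2 * (σ * Complex.I)) = 1 := by
    intro σ hσsq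
    set f : ℝ → ℂ := fun t => a t + b t * (σ * Complex.I) with hf_def
    set f' : ℝ → ℂ := fun t => c t + d t * (σ * Complex.I) with hf'_def
    have hDf : ∀ t, a t ^ 2 + b t ^ 2 = f t * (a t - b t * (σ * Complex.I)) := by
      intro t
      simp only [hf_def]
      linear_combination (b t ^ 2 * Complex.I ^ 2) * hσsq + (b t ^ 2) * Complex.I_sq
    have hfne' : ∀ t ∈ Set.Icc r s, f t ≠ 0 := by
      intro t ht h0
      exact hD t ht (by rw [hDf t, h0, zero_mul])
    have hgne' : ∀ t ∈ Set.Icc r s, a t - b t * (σ * Complex.I) ≠ 0 := by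
      intro t ht h0
      exact hD t ht (by rw [hDf t, h0, mul_zero])
    have hfd : ∀ t ∈ Set.Icc r s, HasDerivAt f (f' t) t := fun t ht =>
      ((hab t ht).1).add (((hab t ht).2).mul_const _)
    have hf'c : ContinuousOn f' (Set.Icc r s) :=
      hcc.add (hdc.mul continuousOn_const)
    have hmain := exp_integral_logderiv r s hrs f f' hfd hf'c hfne'
    have hnum : ∀ t, (a t * c t + b t * d t) + (a t * d t - b t * c t) * (σ * Complex.I)
        = f' t * (a t - b t * (σ * Complex.I)) := by
      intro t
      simp only [hf'_def]
      linear_combination (b t * d t * Complex.I ^ 2) * hσsq + (b t * d t) * Complex.I_sq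
    have heq : Set.EqOn (fun t => f' t / f t)
        (fun t => (q t).1 + (q t).2 * (σ * Complex.I)) (Set.uIcc r s) := by
      rw [huIcc]
      intro t ht
      have calc1 : (q t).1 + (q t).2 * (σ * Complex.I)
          = ((a t * c t + b t * d t) + (a t * d t - b t * c t) * (σ * Complex.I))
            / (a t ^ 2 + b t ^ 2) := by
        rw [hq1, hq2]; ring
      simp only
      rw [calc1, hnum t, hDf t, mul_div_mul_right _ _ (hgne' t ht)]
    have hint_eq : (∫ t in r..s, f' t / f t) = F.1 + F.2 * (σ * Complex.I) := by
      rw [intervalIntegral.integral_congr heq,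
        intervalIntegral.integral_add hqi1 (hqi2.mul_const _),
        intervalIntegral.integral_mul_const, hF1, hF2]
    rw [hint_eq] at hmain
    have hfr : f r = f s := by simp only [hf_def, ha_def, hb_def, hclosed]
    rw [← hfr] at hmain
    exact mul_right_cancel₀ (hfne' r ⟨le_refl r, hrs⟩) (by rw [hmain, one_mul])
  have h1 := key 1 (by ring)
  have h2 := key (-1) (by ring)
  simp only [one_mul] at h1
  rw [Complex.exp_add, Complex.exp_mul_I] at h1
  have h2' : Complex.exp F.1 * (Complex.cos F.2 - Complex.sin F.2 * Complex.I) = 1 := by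
    rw [show F.2 * (-1 * Complex.I) = -F.2 * Complex.I by ring, Complex.exp_add,
      Complex.exp_mul_I, Complex.cos_neg, Complex.sin_neg] at h2
    linear_combination h2
  refine Prod.ext ?_ ?_
  · linear_combination (h1 + h2') / 2
  · linear_combination (-(Complex.I)/2) * (h1 - h2') +
      (Complex.exp F.1 * Complex.sin F.2) * Complex.I_sq
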